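/- Let R be a commutative ring and 1 ≤ k ≤ n. The map ρ : T_k → O_{n−k,n−k}(R) sending a matrix A in the stabiliser T_k = St(e₁, …, e_k) ⊆ O_{n,n}(R) to its lower-right 2(n−k)×2(n−k) block is a surjective group homomorphism. Consequently there is a short exact sequence of groups 1 → L_k → T_k → O_{n−k,n−k}(R) → 1 where L_k = ker ρ. -/

import Mathlib

open Matrix Function

def psi (n : ℕ) (R : Type*) [CommRing R] : Matrix (Fin (2*n)) (Fin (2*n)) R :=
  Matrix.of fun i j => if i.val / 2 = j.val / 2 ∧ i.val ≠ j.val then 1 else 0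

def form (n : ℕ) {R : Type*} [CommRing R] (u v : Fin (2*n) → R) : R :=
  u ⬝ᵥ (psi n R) *ᵥ v

def Onn (n : ℕ) (R : Type*) [CommRing R] : Subgroup (GL (Fin (2*n)) R) where
  carrier := {A | (↑A : Matrix (Fin (2*n)) (Fin (2*n)) R)ᵀ * psi n R * ↑A = psi n R}
  one_mem' := by simp
  mul_mem' := by
    intro a b ha hb
    simp only [Set.mem_setOf_eq, Units.val_mul, Matrix.transpose_mul] at *
    calc (↑b : Matrix _ _ R)ᵀ * (↑a : Matrix _ _ R)ᵀ * psi n R * (↑a * ↑b)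
        = (↑b : Matrix _ _ R)ᵀ * (((↑a : Matrix _ _ R)ᵀ * psi n R * ↑a) * ↑b) := by
          simp only [Matrix.mul_assoc]
      _ = psi n R := by rw [ha, ← Matrix.mul_assoc, hb]
  inv_mem' := by
    intro a ha
    simp only [Set.mem_setOf_eq] at *
    set A : Matrix (Fin (2*n)) (Fin (2*n)) R := ↑a with hA
    set B : Matrix (Fin (2*n)) (Fin (2*n)) R := ↑(a⁻¹) with hB
    have hAB : A * B = 1 := by rw [hA, hB]; exact a.mul_inv
    have key : Bᵀ * (Aᵀ * psi n R * A) * B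
        = (A * B)ᵀ * psi n R * (A * B) := by
      rw [Matrix.transpose_mul]
      simp only [Matrix.mul_assoc]
    conv_lhs => rw [← ha]
    rw [key, hAB]
    simp

def eVec (n : ℕ) (R : Type*) [CommRing R] (i : Fin n) : Fin (2*n) → R :=
  Pi.single ⟨2*i.val, by have := i.isLt; omega⟩ 1

def fVec (n : ℕ) (R : Type*) [CommRing R] (i : Fin n) : Fin (2*n) → R :=
  Pi.single ⟨2*i.val+1, by have := i.isLt; omega⟩ 1

def IsUnimodular (R : Type*) [CommRing R] {M : Type*} [AddCommGroup M] [Module R M]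
    (m : ℕ) {q : ℕ} (v : Fin q → M) : Prop :=
  ∀ s : Finset (Fin q), s.card ≤ min m q →
    ∃ N : Submodule R M, IsCompl (Submodule.span R (v '' ↑s)) N ∧
      Module.Free R (Submodule.span R (v '' ↑s)) ∧
      Module.finrank R (Submodule.span R (v '' ↑s)) = s.card

def IsTotallyIsotropic (n : ℕ) {R : Type*} [CommRing R] {q : ℕ}
    (v : Fin q → (Fin (2*n) → R)) : Prop :=
  ∀ i j, form n (v i) (v j) = 0

def IU (n : ℕ) (R : Type*) [CommRing R] (k : ℕ) :=
  {v : Fin k → Fin (2*n) → R // IsTotallyIsotropic n v ∧ IsUnimodular R (2*n) v}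

def stabOf (n : ℕ) (R : Type*) [CommRing R] (S : Set (Fin (2*n) → R)) :
    Subgroup (GL (Fin (2*n)) R) where
  carrier := {A | ∀ v ∈ S, (↑A : Matrix (Fin (2*n)) (Fin (2*n)) R) *ᵥ v = v}
  one_mem' := by intro v hv; simp
  mul_mem' := by
    intro a b ha hb v hv
    show (↑(a*b) : Matrix (Fin (2*n)) (Fin (2*n)) R) *ᵥ v = v
    rw [Units.val_mul, ← Matrix.mulVec_mulVec, hb v hv, ha v hv]
  inv_mem' := by
    intro a ha v hv
    show (↑(a⁻¹) : Matrix (Fin (2*n)) (Fin (2*n)) R) *ᵥ v = v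
    conv_lhs => rw [← ha v hv]
    rw [Matrix.mulVec_mulVec]
    have : (↑(a⁻¹) : Matrix (Fin (2*n)) (Fin (2*n)) R) * (↑a : Matrix (Fin (2*n)) (Fin (2*n)) R) = 1 := a.inv_mul
    rw [this, Matrix.one_mulVec]

def Dmat (n k : ℕ) {R : Type*} [CommRing R] (a : Rˣ) :
    Matrix (Fin (2*n)) (Fin (2*n)) R :=
  Matrix.diagonal (fun i =>
    if i.val < 2*k then (if i.val % 2 = 0 then (a : R) else ((a⁻¹ : Rˣ) : R)) else 1)

def Bmat (n : ℕ) {R : Type*} [CommRing R] (c : R) :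
    Matrix (Fin (2*n)) (Fin (2*n)) R :=
  Matrix.diagonal (fun i => if i.val % 2 = 0 then 1 else c)




section Aux
variable {R : Type*} [CommRing R]

/-- the pair-swap involution on indices -/
def sig (n : ℕ) (i : Fin (2*n)) : Fin (2*n) :=
  if h : i.val % 2 = 0 then ⟨i.val + 1, by have := i.isLt; omega⟩
  else ⟨i.val - 1, by have := i.isLt; omega⟩

lemma sig_val (n : ℕ) (i : Fin (2*n)) :
    (sig n i).val = if i.val % 2 = 0 then i.val + 1 else i.val - 1 := by
  unfold sig; split_ifs <;> rfl

lemma sig_sig (n : ℕ) (i : Fin (2*n)) : sig n (sig n i) = i := by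
  have h1 := sig_val n i
  have h2 := sig_val n (sig n i)
  apply Fin.ext
  split_ifs at h1 h2 <;> omega

lemma sig_inj (n : ℕ) {i j : Fin (2*n)} (h : sig n i = sig n j) : i = j := by
  have := congrArg (sig n) h
  rwa [sig_sig, sig_sig] at this

lemma psi_apply (n : ℕ) (R : Type*) [CommRing R] (i j : Fin (2*n)) :
    psi n R i j = if j = sig n i then 1 else 0 := by
  have hc : (i.val / 2 = j.val / 2 ∧ i.val ≠ j.val) ↔ j = sig n i := by
    rw [Fin.ext_iff, sig_val]
    constructor
    · rintro ⟨h1, h2⟩; split_ifs with h <;> omega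
    · intro h; split_ifs at h <;> omega
  show (if i.val / 2 = j.val / 2 ∧ i.val ≠ j.val then (1:R) else 0) = _
  rw [if_congr hc rfl rfl]

lemma psi_mul_self (n : ℕ) (R : Type*) [CommRing R] :
    psi n R * psi n R = 1 := by
  ext p q
  rw [Matrix.mul_apply]
  simp only [psi_apply, ite_mul, one_mul, zero_mul]
  rw [Finset.sum_ite_eq' Finset.univ (sig n p) (fun s => if q = sig n s then (1:R) else 0)]
  simp only [Finset.mem_univ, if_true, sig_sig, Matrix.one_apply]
  simp [eq_comm]

lemma triple_apply (n : ℕ) (R : Type*) [CommRing R]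
    (M N : Matrix (Fin (2*n)) (Fin (2*n)) R) (p q : Fin (2*n)) :
    (Mᵀ * psi n R * N) p q = ∑ r, M r p * N (sig n r) q := by
  rw [Matrix.mul_assoc, Matrix.mul_apply]
  refine Finset.sum_congr rfl fun r _ => ?_
  rw [Matrix.transpose_apply]
  congr 1
  rw [Matrix.mul_apply]
  simp only [psi_apply, ite_mul, one_mul, zero_mul]
  rw [Finset.sum_ite_eq' Finset.univ (sig n r) (fun s => N s q)]
  simp

lemma onn_sum_iff (n : ℕ) (R : Type*) [CommRing R]
    (M : Matrix (Fin (2*n)) (Fin (2*n)) R) :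
    Mᵀ * psi n R * M = psi n R ↔
      ∀ p q, (∑ r, M r p * M (sig n r) q) = if q = sig n p then 1 else 0 := by
  constructor
  · intro h p q
    rw [← triple_apply, h, psi_apply]
  · intro h
    ext p q
    rw [triple_apply, h, psi_apply]

end Aux
section Aux2
variable {R : Type*} [CommRing R]

lemma iot_lt (n k : ℕ) (hkn : k ≤ n) (i : Fin (2*(n-k))) : 2*k + i.val < 2*n := by
  have := i.isLt; omega

def iot (n k : ℕ) (hkn : k ≤ n) (i : Fin (2*(n-k))) : Fin (2*n) :=
  ⟨2*k + i.val, iot_lt n k hkn i⟩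

lemma iot_inj (n k : ℕ) (hkn : k ≤ n) {i j : Fin (2*(n-k))}
    (h : iot n k hkn i = iot n k hkn j) : i = j := by
  apply Fin.ext
  have := congrArg Fin.val h
  simpa [iot] using this

lemma sig_iot (n k : ℕ) (hkn : k ≤ n) (i : Fin (2*(n-k))) :
    sig n (iot n k hkn i) = iot n k hkn (sig (n-k) i) := by
  apply Fin.ext
  have h1 := sig_val n (iot n k hkn i)
  have h2 := sig_val (n-k) i
  have hv : (iot n k hkn i).val = 2*k + i.val := rfl
  have hv2 : (iot n k hkn (sig (n-k) i)).val = 2*k + (sig (n-k) i).val := rfl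
  rw [h1, hv2, hv]
  split_ifs at h2 ⊢ <;> omega

lemma sum_iot (n k : ℕ) (hkn : k ≤ n) (f : Fin (2*n) → R)
    (h0 : ∀ r : Fin (2*n), r.val < 2*k → f r = 0) :
    ∑ r, f r = ∑ r', f (iot n k hkn r') := by
  rw [show (∑ r', f (iot n k hkn r')) =
      ∑ r ∈ Finset.univ.image (iot n k hkn), f r from
    (Finset.sum_image (fun a _ b _ h => iot_inj n k hkn h)).symm]
  refine (Finset.sum_subset (Finset.subset_univ _) fun x _ hx => ?_).symm
  refine h0 x ?_
  by_contra hge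
  exact hx (Finset.mem_image.mpr ⟨⟨x.val - 2*k, by have := x.isLt; omega⟩,
    Finset.mem_univ _, Fin.ext (by simp [iot]; omega)⟩)

def extMat (n k : ℕ) (hkn : k ≤ n) (A : Matrix (Fin (2*n)) (Fin (2*n)) R) :
    Matrix (Fin (2*(n-k))) (Fin (2*(n-k))) R :=
  Matrix.of fun i j => A (iot n k hkn i) (iot n k hkn j)

def extdMat (n k : ℕ) (hkn : k ≤ n) (B : Matrix (Fin (2*(n-k))) (Fin (2*(n-k))) R) :
    Matrix (Fin (2*n)) (Fin (2*n)) R :=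
  Matrix.of fun p q =>
    if hp : 2*k ≤ p.val then
      if hq : 2*k ≤ q.val then B ⟨p.val - 2*k, by have := p.isLt; omega⟩
        ⟨q.val - 2*k, by have := q.isLt; omega⟩
      else 0
    else if p = q then 1 else 0

/-- standard-column property -/
def ColStd (n k : ℕ) (M : Matrix (Fin (2*n)) (Fin (2*n)) R) : Prop :=
  ∀ q : Fin (2*n), q.val < 2*k → q.val % 2 = 0 →
    ∀ p, M p q = if p = q then 1 else 0

/-- standard-row property -/
def RowStd (n k : ℕ) (M : Matrix (Fin (2*n)) (Fin (2*n)) R) : Prop :=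
  ∀ s : Fin (2*n), s.val < 2*k → s.val % 2 = 1 →
    ∀ p, M s p = if p = s then 1 else 0

lemma rowStd_of (n k : ℕ) (M : Matrix (Fin (2*n)) (Fin (2*n)) R)
    (hcol : ColStd n k M)
    (hkey : ∀ p q, (∑ r, M r p * M (sig n r) q) = if q = sig n p then 1 else 0) :
    RowStd n k M := by
  intro s hs1 hs2 p
  have hq1 : (sig n s).val < 2*k := by have := sig_val n s; split_ifs at this <;> omega
  have hq2 : (sig n s).val % 2 = 0 := by have := sig_val n s; split_ifs at this <;> omega
  have h := hkey p (sig n s)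
  have hterm : ∀ r : Fin (2*n), M r p * M (sig n r) (sig n s)
      = if r = s then M r p else 0 := by
    intro r
    rw [hcol (sig n s) hq1 hq2 (sig n r)]
    by_cases hr : r = s
    · simp [hr, mul_one]
    · rw [if_neg (fun hc => hr (sig_inj n hc)), if_neg hr, mul_zero]
  rw [Finset.sum_congr rfl (fun r _ => hterm r), Finset.sum_ite_eq' Finset.univ s] at h
  simp only [Finset.mem_univ, if_true] at h
  rw [h]
  by_cases hps : p = s
  · rw [if_pos (by rw [hps]), if_pos hps]
  · rw [if_neg (fun hc => hps ((sig_inj n hc).symm)), if_neg hps]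
end Aux2
section Aux3
variable {R : Type*} [CommRing R]

lemma col_of_fix (n : ℕ) (M : Matrix (Fin (2*n)) (Fin (2*n)) R) (q : Fin (2*n))
    (h : M *ᵥ Pi.single q (1:R) = Pi.single q 1) (p : Fin (2*n)) :
    M p q = if p = q then 1 else 0 := by
  have h2 := congrFun h p
  simp only [Matrix.mulVec_single_one, Matrix.col_apply, mul_one] at h2
  rw [h2, Pi.single_apply]

set_option maxHeartbeats 1000000 in
lemma extMat_onn (n k : ℕ) (hkn : k ≤ n) (M : Matrix (Fin (2*n)) (Fin (2*n)) R)
    (hcol : ColStd n k M) (hrow : RowStd n k M)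
    (hkey : ∀ p q, (∑ r, M r p * M (sig n r) q) = if q = sig n p then 1 else 0) :
    (extMat n k hkn M)ᵀ * psi (n-k) R * extMat n k hkn M = psi (n-k) R := by
  rw [onn_sum_iff]
  intro p q
  have h := hkey (iot n k hkn p) (iot n k hkn q)
  rw [sum_iot n k hkn _ (fun r hr => ?_)] at h
  · simp only [sig_iot n k hkn] at h
    have hRHS : (if iot n k hkn q = iot n k hkn (sig (n-k) p) then (1:R) else 0)
        = if q = sig (n-k) p then 1 else 0 := by
      by_cases hc : q = sig (n-k) p
      · rw [if_pos (by rw [hc]), if_pos hc]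
      · rw [if_neg (fun hx => hc (iot_inj n k hkn hx)), if_neg hc]
    rw [hRHS] at h
    exact h
  · -- r.val < 2*k : the term vanishes
    rcases Nat.even_or_odd r.val with he | ho
    · have hs1 : (sig n r).val < 2*k := by
        have := sig_val n r; rw [Nat.even_iff] at he; split_ifs at this <;> omega
      have hs2 : (sig n r).val % 2 = 1 := by
        have := sig_val n r; rw [Nat.even_iff] at he; split_ifs at this <;> omega
      rw [hrow (sig n r) hs1 hs2 (iot n k hkn q),
        if_neg (fun hc => by have := congrArg Fin.val hc; simp [iot] at this; omega),
        mul_zero]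
    · rw [Nat.odd_iff] at ho
      rw [hrow r hr ho (iot n k hkn p),
        if_neg (fun hc => by have := congrArg Fin.val hc; simp [iot] at this; omega),
        zero_mul]

set_option maxHeartbeats 1000000 in
lemma extMat_mul (n k : ℕ) (hkn : k ≤ n) (M N : Matrix (Fin (2*n)) (Fin (2*n)) R)
    (hcolM : ColStd n k M) (hrowN : RowStd n k N) :
    extMat n k hkn (M * N) = extMat n k hkn M * extMat n k hkn N := by
  ext p q
  show (M * N) (iot n k hkn p) (iot n k hkn q) = _
  rw [Matrix.mul_apply, Matrix.mul_apply]
  rw [sum_iot n k hkn _ (fun r hr => ?_)]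
  · rfl
  · rcases Nat.even_or_odd r.val with he | ho
    · rw [Nat.even_iff] at he
      rw [hcolM r hr he (iot n k hkn p),
        if_neg (fun hc => by have := congrArg Fin.val hc; simp [iot] at this; omega),
        zero_mul]
    · rw [Nat.odd_iff] at ho
      rw [hrowN r hr ho (iot n k hkn q),
        if_neg (fun hc => by have := congrArg Fin.val hc; simp [iot] at this; omega),
        mul_zero]

lemma extdMat_iot (n k : ℕ) (hkn : k ≤ n)
    (B : Matrix (Fin (2*(n-k))) (Fin (2*(n-k))) R) (p q : Fin (2*(n-k))) :
    extdMat n k hkn B (iot n k hkn p) (iot n k hkn q) = B p q := by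
  show (if hp : 2*k ≤ (iot n k hkn p).val then _ else _) = B p q
  rw [dif_pos (show 2*k ≤ (iot n k hkn p).val by simp [iot]),
    dif_pos (show 2*k ≤ (iot n k hkn q).val by simp [iot])]
  congr 1 <;> exact Fin.ext (by simp [iot])

lemma extdMat_row_lt (n k : ℕ) (hkn : k ≤ n)
    (B : Matrix (Fin (2*(n-k))) (Fin (2*(n-k))) R) (p q : Fin (2*n))
    (hp : p.val < 2*k) : extdMat n k hkn B p q = if p = q then 1 else 0 := by
  show (if h : 2*k ≤ p.val then _ else _) = _
  rw [dif_neg (by omega)]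

lemma extdMat_col_lt (n k : ℕ) (hkn : k ≤ n)
    (B : Matrix (Fin (2*(n-k))) (Fin (2*(n-k))) R) (p q : Fin (2*n))
    (hq : q.val < 2*k) : extdMat n k hkn B p q = if p = q then 1 else 0 := by
  by_cases hp : p.val < 2*k
  · exact extdMat_row_lt n k hkn B p q hp
  · show (if h : 2*k ≤ p.val then _ else _) = _
    rw [dif_pos (by omega), dif_neg (by omega),
      if_neg (fun hc => by rw [hc] at hp; omega)]


lemma extdMat_lowleft (n k : ℕ) (hkn : k ≤ n)
    (B : Matrix (Fin (2*(n-k))) (Fin (2*(n-k))) R) (p q : Fin (2*n))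
    (hp : 2*k ≤ p.val) (hq : q.val < 2*k) : extdMat n k hkn B p q = 0 := by
  show (if h : 2*k ≤ p.val then _ else _) = (0:R)
  rw [dif_pos hp, dif_neg (by omega)]

lemma iot_rep (n k : ℕ) (hkn : k ≤ n) (p : Fin (2*n)) (hp : 2*k ≤ p.val) :
    ∃ p', p = iot n k hkn p' :=
  ⟨⟨p.val - 2*k, by have := p.isLt; omega⟩, Fin.ext (by simp [iot]; omega)⟩

lemma iot_val_ge (n k : ℕ) (hkn : k ≤ n) (p : Fin (2*(n-k))) :
    2*k ≤ (iot n k hkn p).val := by simp [iot]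

lemma ne_iot_of_lt (n k : ℕ) (hkn : k ≤ n) {r : Fin (2*n)} (hr : r.val < 2*k)
    (p : Fin (2*(n-k))) : r ≠ iot n k hkn p := by
  intro hc; have := congrArg Fin.val hc; simp [iot] at this; omega

lemma extdMat_one (n k : ℕ) (hkn : k ≤ n) :
    extdMat n k hkn (1 : Matrix (Fin (2*(n-k))) (Fin (2*(n-k))) R) = 1 := by
  ext p q
  by_cases hp : p.val < 2*k
  · rw [extdMat_row_lt n k hkn _ p q hp, Matrix.one_apply]
  · obtain ⟨p', rfl⟩ := iot_rep n k hkn p (by omega)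
    by_cases hq : q.val < 2*k
    · rw [extdMat_lowleft n k hkn _ _ q (iot_val_ge n k hkn p') hq, Matrix.one_apply,
        if_neg (fun hc => (ne_iot_of_lt n k hkn hq p' hc.symm).elim)]
    · obtain ⟨q', rfl⟩ := iot_rep n k hkn q (by omega)
      rw [extdMat_iot, Matrix.one_apply, Matrix.one_apply]
      by_cases hc : p' = q'
      · rw [if_pos hc, if_pos (by rw [hc])]
      · rw [if_neg hc, if_neg (fun hx => hc (iot_inj n k hkn hx))]

lemma extdMat_mul (n k : ℕ) (hkn : k ≤ n)
    (B C : Matrix (Fin (2*(n-k))) (Fin (2*(n-k))) R) :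
    extdMat n k hkn B * extdMat n k hkn C = extdMat n k hkn (B * C) := by
  ext p q
  rw [Matrix.mul_apply]
  by_cases hp : p.val < 2*k
  · have hterm : ∀ r, extdMat n k hkn B p r * extdMat n k hkn C r q
        = if r = p then extdMat n k hkn C r q else 0 := by
      intro r
      rw [extdMat_row_lt n k hkn B p r hp]
      by_cases hc : p = r
      · rw [if_pos hc, if_pos hc.symm, one_mul]
      · rw [if_neg hc, if_neg (fun hx => hc hx.symm), zero_mul]
    rw [Finset.sum_congr rfl (fun r _ => hterm r), Finset.sum_ite_eq' Finset.univ p]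
    simp only [Finset.mem_univ, if_true]
    rw [extdMat_row_lt n k hkn C p q hp, extdMat_row_lt n k hkn (B*C) p q hp]
  · obtain ⟨p', rfl⟩ := iot_rep n k hkn p (by omega)
    by_cases hq : q.val < 2*k
    · have hterm : ∀ r, extdMat n k hkn B (iot n k hkn p') r * extdMat n k hkn C r q
          = if r = q then extdMat n k hkn B (iot n k hkn p') r else 0 := by
        intro r
        rw [extdMat_col_lt n k hkn C r q hq]
        by_cases hc : r = q
        · rw [if_pos hc, if_pos hc, mul_one]
        · rw [if_neg hc, if_neg hc, mul_zero]
      rw [Finset.sum_congr rfl (fun r _ => hterm r), Finset.sum_ite_eq' Finset.univ q]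
      simp only [Finset.mem_univ, if_true]
      rw [extdMat_lowleft n k hkn B _ q (iot_val_ge n k hkn p') hq,
        extdMat_lowleft n k hkn (B*C) _ q (iot_val_ge n k hkn p') hq]
    · obtain ⟨q', rfl⟩ := iot_rep n k hkn q (by omega)
      rw [extdMat_iot, Matrix.mul_apply]
      rw [sum_iot n k hkn _ (fun r hr => ?_)]
      · exact Finset.sum_congr rfl fun r _ => by rw [extdMat_iot, extdMat_iot]
      · rw [extdMat_row_lt n k hkn C r _ hr, if_neg (ne_iot_of_lt n k hkn hr q'),
          mul_zero]

lemma ext_extd (n k : ℕ) (hkn : k ≤ n)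
    (B : Matrix (Fin (2*(n-k))) (Fin (2*(n-k))) R) :
    extMat n k hkn (extdMat n k hkn B) = B := by
  ext p q
  exact extdMat_iot n k hkn B p q

lemma extdMat_onn (n k : ℕ) (hkn : k ≤ n)
    (B : Matrix (Fin (2*(n-k))) (Fin (2*(n-k))) R)
    (hB : Bᵀ * psi (n-k) R * B = psi (n-k) R) :
    (extdMat n k hkn B)ᵀ * psi n R * extdMat n k hkn B = psi n R := by
  rw [onn_sum_iff] at hB ⊢
  intro p q
  by_cases hp : p.val < 2*k
  · have hterm : ∀ r, extdMat n k hkn B r p * extdMat n k hkn B (sig n r) q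
        = if r = p then extdMat n k hkn B (sig n r) q else 0 := by
      intro r
      rw [extdMat_col_lt n k hkn B r p hp]
      by_cases hc : r = p
      · rw [if_pos hc, if_pos hc, one_mul]
      · rw [if_neg hc, if_neg hc, zero_mul]
    rw [Finset.sum_congr rfl (fun r _ => hterm r), Finset.sum_ite_eq' Finset.univ p]
    simp only [Finset.mem_univ, if_true]
    have hsp : (sig n p).val < 2*k := by
      have := sig_val n p; split_ifs at this <;> omega
    rw [extdMat_row_lt n k hkn B (sig n p) q hsp]
    by_cases hc : q = sig n p
    · rw [if_pos hc.symm, if_pos hc]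
    · rw [if_neg (fun hx => hc hx.symm), if_neg hc]
  · obtain ⟨p', rfl⟩ := iot_rep n k hkn p (by omega)
    rw [sum_iot n k hkn _ (fun r hr => ?_)]
    · by_cases hq : q.val < 2*k
      · have hz : ∀ r' : Fin (2*(n-k)),
            extdMat n k hkn B (iot n k hkn r') (iot n k hkn p')
              * extdMat n k hkn B (sig n (iot n k hkn r')) q = 0 := by
          intro r'
          rw [sig_iot n k hkn,
            extdMat_lowleft n k hkn B _ q (iot_val_ge n k hkn _) hq, mul_zero]
        rw [Finset.sum_congr rfl (fun r' _ => hz r'), Finset.sum_const_zero,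
          if_neg (fun hc => ne_iot_of_lt n k hkn hq (sig (n-k) p')
            (by rw [hc, sig_iot n k hkn]))]
      · obtain ⟨q', rfl⟩ := iot_rep n k hkn q (by omega)
        have hrw : ∀ r' : Fin (2*(n-k)),
            extdMat n k hkn B (iot n k hkn r') (iot n k hkn p')
              * extdMat n k hkn B (sig n (iot n k hkn r')) (iot n k hkn q')
            = B r' p' * B (sig (n-k) r') q' := by
          intro r'
          rw [sig_iot n k hkn, extdMat_iot, extdMat_iot]
        rw [Finset.sum_congr rfl (fun r' _ => hrw r'), hB, sig_iot n k hkn]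
        by_cases hc : q' = sig (n-k) p'
        · rw [if_pos hc, if_pos (by rw [hc])]
        · rw [if_neg hc, if_neg (fun hx => hc (iot_inj n k hkn hx))]
    · rw [extdMat_row_lt n k hkn B r _ hr, if_neg (ne_iot_of_lt n k hkn hr p'),
        zero_mul]

end Aux3
section Aux4
variable {R : Type*} [CommRing R]

lemma inv_eqs (m : ℕ) (B : Matrix (Fin (2*m)) (Fin (2*m)) R)
    (hB : Bᵀ * psi m R * B = psi m R) :
    (psi m R * Bᵀ * psi m R) * B = 1 ∧ B * (psi m R * Bᵀ * psi m R) = 1 := by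
  have h1 : (psi m R * Bᵀ * psi m R) * B = 1 := by
    calc (psi m R * Bᵀ * psi m R) * B = psi m R * (Bᵀ * psi m R * B) := by
          simp only [Matrix.mul_assoc]
      _ = 1 := by rw [hB, psi_mul_self]
  exact ⟨h1, mul_eq_one_comm.mpr h1⟩

lemma extdMat_fix (n k : ℕ) (hkn : k ≤ n)
    (B : Matrix (Fin (2*(n-k))) (Fin (2*(n-k))) R) (q : Fin (2*n)) (hq : q.val < 2*k) :
    extdMat n k hkn B *ᵥ Pi.single q (1:R) = Pi.single q 1 := by
  funext p
  simp only [Matrix.mulVec_single_one, Matrix.col_apply, mul_one]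
  rw [extdMat_col_lt n k hkn B p q hq, Pi.single_apply]

lemma main_props (n k : ℕ) (hkn : k ≤ n) (M : Matrix (Fin (2*n)) (Fin (2*n)) R)
    (h1 : Mᵀ * psi n R * M = psi n R)
    (h2 : ∀ i : Fin k, M *ᵥ Pi.single (⟨2*i.val, by have := i.isLt; omega⟩ : Fin (2*n)) (1:R)
      = Pi.single (⟨2*i.val, by have := i.isLt; omega⟩ : Fin (2*n)) 1) :
    ColStd n k M ∧ RowStd n k M ∧
      ((extMat n k hkn M)ᵀ * psi (n-k) R * extMat n k hkn M = psi (n-k) R) := by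
  have hkey := (onn_sum_iff n R M).mp h1
  have hcol : ColStd n k M := by
    intro q hq1 hq2 p
    have hi : q.val / 2 < k := by omega
    have h := h2 ⟨q.val/2, hi⟩
    have hqe : (⟨2*(⟨q.val/2, hi⟩ : Fin k).val, by omega⟩ : Fin (2*n)) = q :=
      Fin.ext (by simp; omega)
    rw [hqe] at h
    exact col_of_fix n M q h p
  have hrow : RowStd n k M := rowStd_of n k M hcol hkey
  exact ⟨hcol, hrow, extMat_onn n k hkn M hcol hrow hkey⟩

end Aux4
theorem statement_10 (n k : ℕ) (R : Type*) [CommRing R]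
    (hk1 : 1 ≤ k) (hkn : k ≤ n)
    (Tk : Subgroup (GL (Fin (2*n)) R))
    (hTk : Tk = Onn n R ⊓ stabOf n R
      {w | ∃ i : Fin k, w = eVec n R ⟨i.val, by have := i.isLt; omega⟩}) :
    ∃ ρ : ↥Tk →* ↥(Onn (n-k) R),
      (∀ (A : ↥Tk) (i j : Fin (2*(n-k))),
        ((↑(ρ A) : GL (Fin (2*(n-k))) R) : Matrix (Fin (2*(n-k))) (Fin (2*(n-k))) R) i j =
          ((↑A : GL (Fin (2*n)) R) : Matrix (Fin (2*n)) (Fin (2*n)) R)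
            ⟨2*k + i.val, by have := i.isLt; omega⟩
            ⟨2*k + j.val, by have := j.isLt; omega⟩) ∧
      Function.Surjective ρ := by
  subst hTk
  have hprops : ∀ A : ↥(Onn n R ⊓ stabOf n R
      {w | ∃ i : Fin k, w = eVec n R ⟨i.val, by have := i.isLt; omega⟩}),
      ColStd n k ((↑(↑A : GL (Fin (2*n)) R) : Matrix (Fin (2*n)) (Fin (2*n)) R)) ∧
      RowStd n k ((↑(↑A : GL (Fin (2*n)) R) : Matrix (Fin (2*n)) (Fin (2*n)) R)) ∧
      ((extMat n k hkn (↑(↑A : GL (Fin (2*n)) R) : Matrix (Fin (2*n)) (Fin (2*n)) R))ᵀ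
        * psi (n-k) R
        * extMat n k hkn (↑(↑A : GL (Fin (2*n)) R) : Matrix (Fin (2*n)) (Fin (2*n)) R)
        = psi (n-k) R) := by
    intro A
    have h1 : ((↑(↑A : GL (Fin (2*n)) R) : Matrix (Fin (2*n)) (Fin (2*n)) R))ᵀ
        * psi n R * (↑(↑A : GL (Fin (2*n)) R) : Matrix (Fin (2*n)) (Fin (2*n)) R)
        = psi n R := (Subgroup.mem_inf.mp A.2).1
    have h2 : ∀ i : Fin k,
        (↑(↑A : GL (Fin (2*n)) R) : Matrix (Fin (2*n)) (Fin (2*n)) R) *ᵥ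
          Pi.single (⟨2*i.val, by have := i.isLt; omega⟩ : Fin (2*n)) (1:R)
        = Pi.single (⟨2*i.val, by have := i.isLt; omega⟩ : Fin (2*n)) 1 := fun i =>
      (Subgroup.mem_inf.mp A.2).2
        (eVec n R ⟨i.val, by have := i.isLt; omega⟩) ⟨i, rfl⟩
    exact main_props n k hkn _ h1 h2
  refine ⟨MonoidHom.mk' (fun A =>
    ⟨⟨extMat n k hkn (↑(↑A : GL (Fin (2*n)) R) : Matrix (Fin (2*n)) (Fin (2*n)) R),
      psi (n-k) R
        * (extMat n k hkn (↑(↑A : GL (Fin (2*n)) R) : Matrix (Fin (2*n)) (Fin (2*n)) R))ᵀ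
        * psi (n-k) R,
      (inv_eqs (n-k) _ (hprops A).2.2).2,
      (inv_eqs (n-k) _ (hprops A).2.2).1⟩,
     (hprops A).2.2⟩) ?_, ?_, ?_⟩
  · intro a b
    apply Subtype.ext
    apply Units.ext
    show extMat n k hkn ((↑(↑a : GL (Fin (2*n)) R) : Matrix (Fin (2*n)) (Fin (2*n)) R)
        * (↑(↑b : GL (Fin (2*n)) R) : Matrix (Fin (2*n)) (Fin (2*n)) R)) = _
    rw [extMat_mul n k hkn _ _ (hprops a).1 (hprops b).2.1]
    rfl
  · intro A i j
    rfl
  · rintro ⟨v, hv⟩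
    have hvm : (↑v : Matrix (Fin (2*(n-k))) (Fin (2*(n-k))) R)ᵀ * psi (n-k) R * (↑v : Matrix (Fin (2*(n-k))) (Fin (2*(n-k))) R)
        = psi (n-k) R := hv
    have hmi : extdMat n k hkn (↑v : Matrix (Fin (2*(n-k))) (Fin (2*(n-k))) R)
        * extdMat n k hkn (↑(v⁻¹) : Matrix (Fin (2*(n-k))) (Fin (2*(n-k))) R) = 1 := by
      rw [extdMat_mul, Units.mul_inv, extdMat_one]
    have him : extdMat n k hkn (↑(v⁻¹) : Matrix (Fin (2*(n-k))) (Fin (2*(n-k))) R)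
        * extdMat n k hkn (↑v : Matrix (Fin (2*(n-k))) (Fin (2*(n-k))) R) = 1 := by
      rw [extdMat_mul, Units.inv_mul, extdMat_one]
    refine ⟨⟨⟨extdMat n k hkn ↑v, extdMat n k hkn ↑(v⁻¹), hmi, him⟩,
      Subgroup.mem_inf.mpr ⟨?_, ?_⟩⟩, ?_⟩
    · exact extdMat_onn n k hkn _ hvm
    · intro w hw
      obtain ⟨i, rfl⟩ := hw
      exact extdMat_fix n k hkn _ _ (by have := i.isLt; simp; try omega)
    · apply Subtype.ext
      apply Units.ext
      exact ext_extd n k hkn (↑v : Matrix (Fin (2*(n-k))) (Fin (2*(n-k))) R)
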